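/- Let A be a finite linear FLew-algebra and γ₁, γ₂ : X → A^X be P_A-coalgebras with Kleisli composition (γ₁ ; γ₂)(x)(z) = ⋁_{y∈X} γ₁(x)(y) ⊙ γ₂(y)(z). Then for every r ∈ A and S ⊆ X: ⋁_{z∈S} (γ₁;γ₂)(x)(z) ≥ r if and only if there exist r₁, r₂ ∈ A with r₁ ⊙ r₂ ≥ r, and y ∈ X with γ₁(x)(y) ≥ r₁ and ⋁_{z∈S} γ₂(y)(z) ≥ r₂. -/

import Mathlib

/-- A complete FLew-algebra. -/
class CompleteFLewAlg (A : Type*) extends CompleteLattice A, CommMonoid A where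
  himp : A → A → A
  one_eq_top : (1 : A) = ⊤
  residuation : ∀ x y z : A, x * y ≤ z ↔ x ≤ himp y z

section Aux

variable {A : Type*} [CompleteFLewAlg A]

lemma CompleteFLewAlg.mul_le_mul_right' {a b : A} (h : a ≤ b) (c : A) :
    a * c ≤ b * c := by
  have hb : b ≤ CompleteFLewAlg.himp c (b * c) :=
    (CompleteFLewAlg.residuation b c (b * c)).mp le_rfl
  exact (CompleteFLewAlg.residuation a c (b * c)).mpr (h.trans hb)

lemma CompleteFLewAlg.mul_le_mul' {a b c d : A} (h₁ : a ≤ b) (h₂ : c ≤ d) :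
    a * c ≤ b * d := by
  calc a * c ≤ b * c := CompleteFLewAlg.mul_le_mul_right' h₁ c
    _ = c * b := mul_comm _ _
    _ ≤ d * b := CompleteFLewAlg.mul_le_mul_right' h₂ b
    _ = b * d := mul_comm _ _

lemma CompleteFLewAlg.sSup_mem_insert [Fintype A]
    (hlin : ∀ a b : A, a ≤ b ∨ b ≤ a) (T : Set A) :
    sSup T ∈ insert (⊥ : A) T := by
  have hT : T.Finite := Set.toFinite T
  refine Set.Finite.induction_on (motive := fun s _ => sSup s ∈ insert (⊥ : A) s) T hT (by simp) ?_
  intro a s _ _ ih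
  rw [sSup_insert]
  rcases hlin a (sSup s) with h | h
  · rw [sup_eq_right.mpr h]
    rcases ih with h' | h'
    · exact Or.inl h'
    · exact Or.inr (Set.mem_insert_iff.mpr (Or.inr h'))
  · rw [sup_eq_left.mpr h]
    exact Or.inr (Set.mem_insert _ _)

lemma CompleteFLewAlg.exists_le_of_le_iSup [Fintype A]
    (hlin : ∀ a b : A, a ≤ b ∨ b ≤ a) {ι : Sort*} {f : ι → A} {r : A}
    (hr : r ≤ ⨆ i, f i) (hb : ¬ r ≤ ⊥) : ∃ i, r ≤ f i := by
  have h := CompleteFLewAlg.sSup_mem_insert hlin (Set.range f)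
  rw [← sSup_range] at hr
  rcases h with h | h
  · exact absurd (hr.trans_eq h) hb
  · obtain ⟨i, hi⟩ := h
    exact ⟨i, hr.trans_eq hi.symm⟩

lemma CompleteFLewAlg.mul_bot (a : A) : a * (⊥ : A) = ⊥ := by
  refine le_antisymm ?_ bot_le
  have htop : (⊤ : A) * ⊥ ≤ ⊥ := by
    rw [← CompleteFLewAlg.one_eq_top, one_mul]
  have := (CompleteFLewAlg.residuation ⊤ ⊥ ⊥).mp htop
  exact (CompleteFLewAlg.residuation a ⊥ ⊥).mpr (le_top.trans this)

end Aux

/-- For a finite linear FLew-algebra `A` and `P_A`-coalgebras `γ₁, γ₂` with Kleisli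
composition `(γ₁;γ₂)(x)(z) = ⋁_y γ₁(x)(y) ⊙ γ₂(y)(z)`:
`⋁_{z∈S} (γ₁;γ₂)(x)(z) ≥ r` iff there are `r₁, r₂` with `r₁ ⊙ r₂ ≥ r` and some `y` with
`γ₁(x)(y) ≥ r₁` and `⋁_{z∈S} γ₂(y)(z) ≥ r₂`. -/
theorem kleisli_lamR_reduction (A : Type*) [CompleteFLewAlg A] [Fintype A]
    (hlin : ∀ a b : A, a ≤ b ∨ b ≤ a)
    {X : Type*} (γ₁ γ₂ : X → X → A) (r : A) (S : Set X) (x : X) :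
    (r ≤ ⨆ z ∈ S, ⨆ y, γ₁ x y * γ₂ y z) ↔
      ∃ r₁ r₂ : A, r ≤ r₁ * r₂ ∧
        ∃ y : X, r₁ ≤ γ₁ x y ∧ r₂ ≤ ⨆ z ∈ S, γ₂ y z := by
  constructor
  · intro h
    by_cases hb : r ≤ ⊥
    · exact ⟨⊥, ⊥, hb.trans bot_le, x, bot_le, bot_le⟩
    · rw [iSup_subtype'] at h
      obtain ⟨⟨z, hz⟩, hz'⟩ := CompleteFLewAlg.exists_le_of_le_iSup hlin h hb
      obtain ⟨y, hy⟩ := CompleteFLewAlg.exists_le_of_le_iSup hlin hz' hb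
      refine ⟨γ₁ x y, γ₂ y z, hy, y, le_rfl, ?_⟩
      exact le_iSup₂_of_le z hz le_rfl
  · rintro ⟨r₁, r₂, hr, y, h₁, h₂⟩
    by_cases hb : r ≤ ⊥
    · exact hb.trans bot_le
    · have hb₂ : ¬ r₂ ≤ ⊥ := by
        intro h
        apply hb
        have : r₁ * r₂ ≤ r₁ * ⊥ :=
          CompleteFLewAlg.mul_le_mul' le_rfl h
        rw [CompleteFLewAlg.mul_bot] at this
        exact hr.trans this
      rw [iSup_subtype'] at h₂
      obtain ⟨⟨z, hz⟩, hz'⟩ := CompleteFLewAlg.exists_le_of_le_iSup hlin h₂ hb₂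
      have : r ≤ γ₁ x y * γ₂ y z := hr.trans (CompleteFLewAlg.mul_le_mul' h₁ hz')
      exact this.trans (le_iSup₂_of_le z hz (le_iSup_of_le y le_rfl))
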